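/- Let S ≤ P_n be the stabilizer of an n-qubit stabilizer state whose stabilizer matrix, after qubit permutation, has the standard form [I_k P | Q 0; 0 0 | Pᵀ I_{n−k}] over F₂. Let C ≤ F₂ⁿ be the binary code generated by [Pᵀ I_{n−k}] (the Z-only part). If every minimal-support element of S is a Z-only operator, then every minimal codeword of C corresponds to a minimal-support element of S. -/

import Mathlib

open Finset

/-- Support of a Pauli element given in binary symplectic form `(a | b)`. -/
def psupp {ι : Type*} (g : (ι → ZMod 2) × (ι → ZMod 2)) : Set ι :=
  {i | g.1 i ≠ 0 ∨ g.2 i ≠ 0}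

/-- Minimal-support element of a stabilizer (a subspace of `F₂^{2n}`). -/
def MinElt {ι : Type*}
    (S : Submodule (ZMod 2) ((ι → ZMod 2) × (ι → ZMod 2)))
    (g : (ι → ZMod 2) × (ι → ZMod 2)) : Prop :=
  g ∈ S ∧ g ≠ 0 ∧ ∀ h ∈ S, h ≠ 0 → psupp h ⊆ psupp g → psupp h = psupp g

def bsupp {ι : Type*} (c : ι → ZMod 2) : Set ι := {i | c i ≠ 0}

/-- Minimal codeword of a binary code. -/
def MinCodeword {ι : Type*} (C : Submodule (ZMod 2) (ι → ZMod 2))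
    (c : ι → ZMod 2) : Prop :=
  c ∈ C ∧ c ≠ 0 ∧ ∀ x ∈ C, x ≠ 0 → bsupp x ⊆ bsupp c → bsupp x = bsupp c

/-! ### Auxiliary definitions and lemmas -/

def Vgen (k m : ℕ) (P : Matrix (Fin k) (Fin m) (ZMod 2))
    (Q : Matrix (Fin k) (Fin k) (ZMod 2)) :
    Fin k ⊕ Fin m → (Fin k ⊕ Fin m → ZMod 2) × (Fin k ⊕ Fin m → ZMod 2) :=
  Sum.elim
    (fun i : Fin k =>
      ((Sum.elim (fun a : Fin k => if a = i then (1 : ZMod 2) else 0)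
          (fun b : Fin m => P i b),
        Sum.elim (fun a : Fin k => Q i a) (fun _ : Fin m => (0 : ZMod 2)))))
    (fun i : Fin m =>
      ((0 : Fin k ⊕ Fin m → ZMod 2),
        Sum.elim (fun a : Fin k => P a i)
          (fun b : Fin m => if b = i then (1 : ZMod 2) else 0)))

def Wgen (k m : ℕ) (P : Matrix (Fin k) (Fin m) (ZMod 2)) :
    Fin m → (Fin k ⊕ Fin m → ZMod 2) :=
  fun i : Fin m => fun j : Fin k ⊕ Fin m =>
    Sum.elim (fun a : Fin k => P a i)
      (fun b : Fin m => if b = i then (1 : ZMod 2) else 0) j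

lemma psupp_zero_left {ι : Type*} (c : ι → ZMod 2) :
    psupp ((0 : ι → ZMod 2), c) = bsupp c := by
  ext i; simp [psupp, bsupp]

lemma exists_minElt_aux {ι : Type*} [Fintype ι]
    (S : Submodule (ZMod 2) ((ι → ZMod 2) × (ι → ZMod 2))) :
    ∀ (n : ℕ) (h : (ι → ZMod 2) × (ι → ZMod 2)), h ∈ S → h ≠ 0 →
      (psupp h).ncard ≤ n → ∃ g, MinElt S g ∧ psupp g ⊆ psupp h := by
  intro n
  induction n with
  | zero =>
      intro h hS h0 hc
      exfalso
      apply h0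
      have he : psupp h = ∅ := by
        rw [← Set.ncard_eq_zero (Set.toFinite _)]
        omega
      have hz : ∀ i, h.1 i = 0 ∧ h.2 i = 0 := by
        intro i
        by_contra hcon
        have hi : i ∈ psupp h := by
          simp only [psupp, Set.mem_setOf_eq]
          tauto
        simp [he] at hi
      exact Prod.ext (funext fun i => (hz i).1) (funext fun i => (hz i).2)
  | succ n ih =>
      intro h hS h0 hc
      by_cases hmin : ∀ h' ∈ S, h' ≠ 0 → psupp h' ⊆ psupp h → psupp h' = psupp h
      · exact ⟨h, ⟨hS, h0, hmin⟩, subset_rfl⟩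
      · push_neg at hmin
        obtain ⟨h', hS', h0', hsub, hne⟩ := hmin
        have hlt : (psupp h').ncard < (psupp h).ncard :=
          Set.ncard_lt_ncard (hsub.ssubset_of_ne hne) (Set.toFinite _)
        obtain ⟨g, hg, hgsub⟩ := ih h' hS' h0' (by omega)
        exact ⟨g, hg, hgsub.trans hsub⟩

lemma zmem_lemma (k m : ℕ) (P : Matrix (Fin k) (Fin m) (ZMod 2))
    (Q : Matrix (Fin k) (Fin k) (ZMod 2)) (z : Fin k ⊕ Fin m → ZMod 2)
    (hz : z ∈ Submodule.span (ZMod 2) (Set.range (Wgen k m P))) :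
    ((0 : Fin k ⊕ Fin m → ZMod 2), z) ∈
      Submodule.span (ZMod 2) (Set.range (Vgen k m P Q)) := by
  induction hz using Submodule.span_induction with
  | mem x hx =>
      obtain ⟨j, rfl⟩ := hx
      exact Submodule.subset_span ⟨Sum.inr j, rfl⟩
  | zero => exact Submodule.zero_mem _
  | add x y _ _ hx hy =>
      have := Submodule.add_mem _ hx hy
      simpa using this
  | smul a x _ hx =>
      have := Submodule.smul_mem _ a hx
      simpa [Prod.smul_def] using this

lemma struct_lemma (k m : ℕ) (P : Matrix (Fin k) (Fin m) (ZMod 2))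
    (Q : Matrix (Fin k) (Fin k) (ZMod 2))
    (g : (Fin k ⊕ Fin m → ZMod 2) × (Fin k ⊕ Fin m → ZMod 2))
    (hg : g ∈ Submodule.span (ZMod 2) (Set.range (Vgen k m P Q)))
    (hg1 : g.1 = 0) :
    g.2 ∈ Submodule.span (ZMod 2) (Set.range (Wgen k m P)) := by
  rw [Submodule.mem_span_range_iff_exists_fun] at hg
  obtain ⟨f, rfl⟩ := hg
  have hfst : ∀ a : Fin k, f (Sum.inl a) = 0 := by
    intro a
    have h1 := congrFun hg1 (Sum.inl a)
    simpa [Prod.fst_sum, Finset.sum_apply, Fintype.sum_sum_type, Vgen,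
      mul_ite, Finset.sum_ite_eq] using h1
  have hsnd : (∑ i, f i • Vgen k m P Q i).2
      = ∑ j : Fin m, f (Sum.inr j) • Wgen k m P j := by
    rw [Prod.snd_sum, Fintype.sum_sum_type]
    simp [hfst, Vgen]
    rfl
  rw [hsnd]
  exact Submodule.sum_mem _ fun j _ =>
    Submodule.smul_mem _ _ (Submodule.subset_span ⟨j, rfl⟩)

/-- For a stabilizer in standard form `[I_k P | Q 0 ; 0 0 | Pᵀ I_{n-k}]`, if
every minimal-support element of `S` is a `Z`-only operator, then every
minimal codeword of the code `C` generated by `[Pᵀ I_{n-k}]` gives a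
minimal-support element of `S`. -/
theorem stmt9 (k m : ℕ) (P : Matrix (Fin k) (Fin m) (ZMod 2))
    (Q : Matrix (Fin k) (Fin k) (ZMod 2))
    (S : Submodule (ZMod 2)
      ((Fin k ⊕ Fin m → ZMod 2) × (Fin k ⊕ Fin m → ZMod 2)))
    (hS : S = Submodule.span (ZMod 2) (Set.range
      (Sum.elim
        (fun i : Fin k =>
          ((Sum.elim (fun a : Fin k => if a = i then (1 : ZMod 2) else 0)
              (fun b : Fin m => P i b),
            Sum.elim (fun a : Fin k => Q i a) (fun _ : Fin m => (0 : ZMod 2)))))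
        (fun i : Fin m =>
          ((0 : Fin k ⊕ Fin m → ZMod 2),
            Sum.elim (fun a : Fin k => P a i)
              (fun b : Fin m => if b = i then (1 : ZMod 2) else 0))))))
    (C : Submodule (ZMod 2) (Fin k ⊕ Fin m → ZMod 2))
    (hC : C = Submodule.span (ZMod 2)
      (Set.range fun i : Fin m => fun j : Fin k ⊕ Fin m =>
        Sum.elim (fun a : Fin k => P a i)
          (fun b : Fin m => if b = i then (1 : ZMod 2) else 0) j))
    (hZonly : ∀ g, MinElt S g → g.1 = 0) :
    ∀ c, MinCodeword C c → MinElt S (0, c) := by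
  have hS' : S = Submodule.span (ZMod 2) (Set.range (Vgen k m P Q)) := hS
  have hC' : C = Submodule.span (ZMod 2) (Set.range (Wgen k m P)) := hC
  clear hS hC
  intro c hc
  obtain ⟨hcC, hc0, hcmin⟩ := hc
  refine ⟨hS' ▸ zmem_lemma k m P Q c (hC' ▸ hcC), ?_, ?_⟩
  · intro h0
    exact hc0 (congrArg Prod.snd h0)
  · intro h hhS hh0 hhsub
    obtain ⟨g, hgmin, hgsub⟩ :=
      exists_minElt_aux S (psupp h).ncard h hhS hh0 le_rfl
    have hgS := hgmin.1
    have hg0 := hgmin.2.1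
    have hg1 : g.1 = 0 := hZonly g hgmin
    have hg2C : g.2 ∈ C := hC' ▸ struct_lemma k m P Q g (hS' ▸ hgS) hg1
    have hg2ne : g.2 ≠ 0 := by
      intro h2
      exact hg0 (Prod.ext hg1 h2)
    have hsupg : psupp g = bsupp g.2 := by
      ext i
      simp [psupp, bsupp, hg1]
    rw [psupp_zero_left] at hhsub ⊢
    have hchain : bsupp g.2 ⊆ bsupp c := by
      rw [← hsupg]
      exact hgsub.trans hhsub
    have heq : bsupp g.2 = bsupp c := hcmin g.2 hg2C hg2ne hchain
    refine subset_antisymm hhsub ?_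
    rw [← heq, ← hsupg]
    exact hgsub
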